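/- For all closed subspaces X and Y of a Hilbert space H, the preimage of Y under the orthogonal projection P_X onto X equals X^⊥ ⊕ (X ∩ Y), the closed span of X^⊥ and X ∩ Y. -/

import Mathlib

theorem stmt_5 {H : Type*} [NormedAddCommGroup H] [InnerProductSpace ℂ H]
    [CompleteSpace H] (X Y : Submodule ℂ H)
    (hX : IsClosed (X : Set H)) (hY : IsClosed (Y : Set H)) :
    haveI : CompleteSpace X := hX.completeSpace_coe
    (fun w : H => (Submodule.orthogonalProjection X w : H)) ⁻¹' (Y : Set H) =
      (((Xᗮ ⊔ (X ⊓ Y)).topologicalClosure : Submodule ℂ H) : Set H) := by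
  haveI : CompleteSpace X := hX.completeSpace_coe
  set f : H →L[ℂ] H := X.subtypeL.comp (Submodule.orthogonalProjection X) with hf
  have hfw : ∀ w : H, f w = (Submodule.orthogonalProjection X w : H) := fun w => rfl
  have hset : (fun w : H => (Submodule.orthogonalProjection X w : H)) ⁻¹' (Y : Set H)
      = ((Y.comap (f : H →ₗ[ℂ] H) : Submodule ℂ H) : Set H) := rfl
  have hcomap : Y.comap (f : H →ₗ[ℂ] H) = Xᗮ ⊔ (X ⊓ Y) := by
    apply le_antisymm
    · intro w hw
      have hmem : (Submodule.orthogonalProjection X w : H) ∈ Y := hw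
      have h1 : w - (Submodule.orthogonalProjection X w : H) ∈ Xᗮ :=
        Submodule.sub_starProjection_mem_orthogonal w
      have h2 : (Submodule.orthogonalProjection X w : H) ∈ X ⊓ Y :=
        ⟨(Submodule.orthogonalProjection X w).2, hmem⟩
      have : w = (w - (Submodule.orthogonalProjection X w : H)) +
          (Submodule.orthogonalProjection X w : H) := (sub_add_cancel w _).symm
      rw [this]
      exact Submodule.add_mem _ (Submodule.mem_sup_left h1) (Submodule.mem_sup_right h2)
    · apply sup_le
      · intro w hw
        show (Submodule.orthogonalProjection X w : H) ∈ Y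
        rw [Submodule.orthogonalProjectionOnto_apply_of_mem_orthogonal hw]
        exact Y.zero_mem
      · intro w hw
        show (Submodule.orthogonalProjection X w : H) ∈ Y
        rw [show (Submodule.orthogonalProjection X w : H) = w from Submodule.starProjection_eq_self_iff.2 hw.1]
        exact hw.2
  have hclosed : IsClosed ((Xᗮ ⊔ (X ⊓ Y) : Submodule ℂ H) : Set H) := by
    rw [← hcomap]
    exact hY.preimage f.continuous
  rw [hset, hcomap, hclosed.submodule_topologicalClosure_eq]
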